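/- For every α ≥ 0 there is a constant C = C(α) ≥ 0 such that for every polynomial f(z) = Σ_{k=0}^{N} a_k z^k one has Σ_{k=0}^{N} |a_k| (1+k)^α ≤ C · Σ_{n=0}^{∞} 2^{(α + 1/2)n} sup_{|z|<1} |Σ_k φ_n(k) a_k z^k|; that is, the analytic Besov space B^{α+1/2}_{∞,1}(𝔻) embeds continuously into the weighted Wiener algebra A_α(𝔻). -/

import Mathlib

open MeasureTheory

/-- The dyadic partition of unity `(φ_n)_{n ≥ 0}` on `ℤ₊`. -/
noncomputable def dyadicPhi (n k : ℕ) : ℝ :=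
  if n = 0 then (if k ≤ 1 then 1 else 0)
  else if k ≤ 2 ^ (n - 1) then 0
  else if k ≤ 2 ^ n then ((k : ℝ) - 2 ^ (n - 1)) / 2 ^ (n - 1)
  else if k ≤ 2 ^ (n + 1) then ((2 : ℝ) ^ (n + 1) - (k : ℝ)) / 2 ^ n
  else 0


section BesovProof
open Finset Complex


lemma phi_nonneg (n k : ℕ) : 0 ≤ dyadicPhi n k := by
  unfold dyadicPhi
  split_ifs with h1 h2 h3 h4 h5
  · norm_num
  · norm_num
  · norm_num
  · have h3' : (2:ℝ)^(n-1) ≤ (k:ℝ) := by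
      have := Nat.le_of_not_le h3
      exact_mod_cast Nat.cast_le.mpr (by omega : 2^(n-1) ≤ k)
    have : (0:ℝ) < 2^(n-1) := by positivity
    apply div_nonneg (by linarith) (by positivity)
  · have h5' : (k:ℝ) ≤ 2^(n+1) := by exact_mod_cast Nat.cast_le.mpr h5
    apply div_nonneg (by linarith) (by positivity)
  · norm_num

lemma phi_le_one (n k : ℕ) : dyadicPhi n k ≤ 1 := by
  unfold dyadicPhi
  split_ifs with h1 h2 h3 h4 h5
  · norm_num
  · norm_num
  · norm_num
  · have h4' : (k:ℝ) ≤ 2^n := by exact_mod_cast Nat.cast_le.mpr h4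
    have hp : (0:ℝ) < 2^(n-1) := by positivity
    rw [div_le_one hp]
    have : (2:ℝ)^n = 2^(n-1) * 2 := by
      rw [← pow_succ]
      congr 1
      omega
    linarith
  · have h3' : (2:ℝ)^n < (k:ℝ) := by exact_mod_cast Nat.cast_lt.mpr (by omega : 2^n < k)
    have hp : (0:ℝ) < 2^n := by positivity
    rw [div_le_one hp]
    have : (2:ℝ)^(n+1) = 2^n * 2 := by rw [pow_succ]
    linarith
  · norm_num

lemma phi_zero_low {n k : ℕ} (hn : n ≠ 0) (h : k ≤ 2^(n-1)) : dyadicPhi n k = 0 := by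
  unfold dyadicPhi
  simp [hn, h]

lemma phi_zero_high {n k : ℕ} (h : 2^(n+1) < k) : dyadicPhi n k = 0 := by
  unfold dyadicPhi
  have h1 : ¬ k ≤ 1 := by
    have : 1 < 2^(n+1) := by
      have := Nat.one_lt_two_pow (n := n+1) (by omega)
      omega
    omega
  have h2 : ¬ k ≤ 2^n := by
    have : 2^n ≤ 2^(n+1) := Nat.pow_le_pow_right (by norm_num) (by omega)
    omega
  have h3 : ¬ k ≤ 2^(n+1) := by omega
  split_ifs with hn h4 <;> simp_all

lemma phi_support {n k : ℕ} (h : dyadicPhi n k ≠ 0) : k ≤ 2^(n+1) := by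
  by_contra hc
  exact h (phi_zero_high (by omega))

lemma phi_sum_eq_one {k N : ℕ} (hk : k ≤ N) :
    ∑ n ∈ range (N + 2), dyadicPhi n k = 1 := by
  rcases le_or_gt k 1 with hk1 | hk1
  · rw [Finset.sum_eq_single 0]
    · unfold dyadicPhi; simp [hk1]
    · intro n _ hn
      exact phi_zero_low hn (le_trans hk1 (Nat.one_le_two_pow))
    · intro h; simp at h
  · -- k ≥ 2
    obtain ⟨n, h1, h2⟩ : ∃ n, 2^(n-1) < k ∧ k ≤ 2^n :=
      ⟨Nat.clog 2 k, Nat.pow_pred_clog_lt_self (by norm_num) hk1,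
        Nat.le_pow_clog (by norm_num) k⟩
    have hn1 : 1 ≤ n := by
      rcases Nat.eq_zero_or_pos n with h | h
      · subst h; simp at h2; omega
      · exact h
    have hnN : n ≤ N + 1 := by
      have : n - 1 < 2^(n-1) := Nat.lt_two_pow_self
      omega
    have hsub : ({n - 1, n} : Finset ℕ) ⊆ range (N + 2) := by
      intro x hx
      simp at hx
      rcases hx with h | h <;> simp [h] <;> omega
    rw [← Finset.sum_subset hsub]
    · -- sum over {n-1, n}
      have hne : n - 1 ≠ n := by omega
      rw [Finset.sum_insert (by simp [hne]), Finset.sum_singleton]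
      rcases Nat.lt_or_ge n 2 with h | h
      · -- n = 1, so k = 2
        have hn1' : n = 1 := by omega
        have hk2 : k = 2 := by
          rw [hn1'] at h1 h2; simp at h1 h2; omega
        rw [hn1', hk2]
        unfold dyadicPhi
        norm_num
      · -- n ≥ 2 : n = m + 2
        obtain ⟨m, rfl⟩ : ∃ m, n = m + 2 := ⟨n - 2, by omega⟩
        have e1 : m + 2 - 1 = m + 1 := by omega
        have e2 : m + 1 - 1 = m := by omega
        have hlt : 2^(m+1) < k := by rwa [e1] at h1
        unfold dyadicPhi
        rw [e1, e2]
        have c1 : ¬ (m + 1 = 0) := by omega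
        have c2 : ¬ (m + 2 = 0) := by omega
        have c3 : ¬ (k ≤ 2^m) := by
          have : 2^m ≤ 2^(m+1) := Nat.pow_le_pow_right (by norm_num) (by omega)
          omega
        have c4 : ¬ (k ≤ 2^(m+1)) := by omega
        simp only [if_neg c1, if_neg c2, if_neg c3, if_neg c4, if_pos h2]
        have hk' : (k:ℝ) ≤ 2^(m+2) := by exact_mod_cast h2
        have hp : (0:ℝ) < 2^(m+1) := by positivity
        field_simp
        ring
    · intro x hx hnot
      simp at hnot
      rcases Nat.lt_or_ge x (n-1) with hlt | hge
      · -- x ≤ n - 2: k > 2^(n-1) ≥ 2^(x+1)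
        apply phi_zero_high
        have : 2^(x+1) ≤ 2^(n-1) := Nat.pow_le_pow_right (by norm_num) (by omega)
        omega
      · -- x ≥ n + 1
        have hx1 : n + 1 ≤ x := by omega
        apply phi_zero_low (by omega)
        have : 2^n ≤ 2^(x-1) := Nat.pow_le_pow_right (by norm_num) (by omega)
        omega

lemma roots_orth (N : ℕ) (j k : ℕ) (hj : j < N + 1) (hk : k < N + 1) :
    ∑ t ∈ range (N + 1),
      (Complex.exp (2 * Real.pi * Complex.I / (N+1)) ^ j *
       (Complex.exp (2 * Real.pi * Complex.I / (N+1)) ^ k)⁻¹) ^ t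
      = if j = k then (N + 1 : ℂ) else 0 := by
  set ω := Complex.exp (2 * Real.pi * Complex.I / (N+1)) with hω
  have hprim : IsPrimitiveRoot ω (N + 1) := by
    have := Complex.isPrimitiveRoot_exp (N+1) (Nat.succ_ne_zero N)
    convert this using 2
    push_cast
    ring
  have hω0 : ω ≠ 0 := by
    intro h
    have := hprim.pow_eq_one
    rw [h] at this
    simp at this
  by_cases hjk : j = k
  · subst hjk
    rw [mul_inv_cancel₀ (pow_ne_zero _ hω0)]
    simp
  · rw [if_neg hjk]
    set ζ := ω ^ j * (ω ^ k)⁻¹ with hζ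
    have hζ1 : ζ ≠ 1 := by
      intro h
      apply hjk
      apply hprim.pow_inj hj hk
      rw [hζ, mul_inv_eq_one₀ (pow_ne_zero _ hω0)] at h
      exact h
    have hζm : ζ ^ (N + 1) = 1 := by
      rw [hζ, mul_pow, inv_pow, ← pow_mul, ← pow_mul, mul_comm j, mul_comm k,
        pow_mul, pow_mul, hprim.pow_eq_one, one_pow, one_pow]
      simp
    rw [geom_sum_eq hζ1, hζm]
    simp


lemma parseval_bound (N : ℕ) (b : ℕ → ℂ) (M : ℝ)
    (hM : ∀ z : ℂ, ‖z‖ < 1 →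
      ‖∑ k ∈ range (N + 1), b k * z ^ k‖ ≤ M) :
    ∑ k ∈ range (N + 1), (‖b k‖) ^ 2 ≤ 4 * M ^ 2 := by
  set ω := Complex.exp (2 * Real.pi * Complex.I / (N+1)) with hω
  have habsω : ‖ω‖ = 1 := by
    have h : 2 * Real.pi * Complex.I / (N+1) = ((2 * Real.pi / (N+1) : ℝ) : ℂ) * Complex.I := by
      push_cast; ring
    rw [hω, h, Complex.norm_exp_ofReal_mul_I]
  have hconjω : (starRingEnd ℂ) ω = ω⁻¹ := (Complex.inv_eq_conj habsω).symm
  set r : ℝ := (4 : ℝ) ^ (-(1 : ℝ) / (2 * (N + 1))) with hr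
  have hr0 : 0 < r := Real.rpow_pos_of_pos (by norm_num) _
  have hr1 : r < 1 := by
    apply Real.rpow_lt_one_of_one_lt_of_neg (by norm_num)
    apply div_neg_of_neg_of_pos (by norm_num)
    positivity
  have hrk : ∀ k : ℕ, k ≤ N → (1 : ℝ) / 4 ≤ r ^ (2 * k) := by
    intro k hk
    have e1 : r ^ (2 * k) = (4 : ℝ) ^ (-((k : ℝ) / ((N : ℝ) + 1))) := by
      rw [hr, ← Real.rpow_natCast ((4:ℝ) ^ (-(1 : ℝ) / (2 * ((N:ℝ) + 1)))) (2*k),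
        ← Real.rpow_mul (by norm_num)]
      congr 1
      have hN : ((N:ℝ) + 1) ≠ 0 := by positivity
      push_cast
      field_simp
    have e2 : (1 : ℝ) / 4 = (4 : ℝ) ^ (-1 : ℝ) := by
      rw [Real.rpow_neg_one]; norm_num
    rw [e1, e2]
    apply Real.rpow_le_rpow_of_exponent_le (by norm_num)
    rw [neg_le_neg_iff]
    rw [div_le_one (by positivity)]
    have : (k:ℝ) ≤ (N:ℝ) := by exact_mod_cast hk
    linarith
  have hM0 : 0 ≤ M := le_trans (norm_nonneg _) (hM 0 (by simp))
  -- expansion of |g(r ω^t)|^2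
  have key : ∀ t : ℕ,
      (∑ k ∈ range (N+1), b k * ((r:ℂ) * ω ^ t) ^ k)
        * (starRingEnd ℂ) (∑ k ∈ range (N+1), b k * ((r:ℂ) * ω ^ t) ^ k)
      = ∑ k ∈ range (N+1), ∑ j ∈ range (N+1),
          (b k * (starRingEnd ℂ) (b j) * (r:ℂ)^k * (r:ℂ)^j) * ((ω^k * (ω^j)⁻¹)^t) := by
    intro t
    rw [map_sum, Finset.sum_mul_sum]
    apply Finset.sum_congr rfl
    intro k _
    apply Finset.sum_congr rfl
    intro j _
    have hω0 : ω ≠ 0 := by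
      intro h0
      rw [h0] at habsω; simp at habsω
    simp only [map_mul, map_pow, Complex.conj_ofReal, hconjω]
    field_simp
    ring
  -- sum over t
  have key2 : ∑ t ∈ range (N+1),
      (∑ k ∈ range (N+1), b k * ((r:ℂ) * ω ^ t) ^ k)
        * (starRingEnd ℂ) (∑ k ∈ range (N+1), b k * ((r:ℂ) * ω ^ t) ^ k)
      = (N+1 : ℂ) * ∑ k ∈ range (N+1), (b k * (starRingEnd ℂ) (b k)) * ((r:ℂ)^k * (r:ℂ)^k) := by
    rw [Finset.sum_congr rfl (fun t _ => key t)]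
    rw [Finset.sum_comm]
    have : ∀ k ∈ range (N+1),
        ∑ t ∈ range (N+1), ∑ j ∈ range (N+1),
          (b k * (starRingEnd ℂ) (b j) * (r:ℂ)^k * (r:ℂ)^j) * ((ω^k * (ω^j)⁻¹)^t)
        = (b k * (starRingEnd ℂ) (b k)) * ((r:ℂ)^k * (r:ℂ)^k) * (N+1 : ℂ) := by
      intro k hk
      rw [Finset.sum_comm]
      have hstep : ∀ j ∈ range (N+1),
          ∑ t ∈ range (N+1), (b k * (starRingEnd ℂ) (b j) * (r:ℂ)^k * (r:ℂ)^j) * ((ω^k * (ω^j)⁻¹)^t)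
          = (b k * (starRingEnd ℂ) (b j) * (r:ℂ)^k * (r:ℂ)^j) * (if k = j then (N+1 : ℂ) else 0) := by
        intro j hj
        rw [← Finset.mul_sum, roots_orth N k j (mem_range.mp hk) (mem_range.mp hj)]
      rw [Finset.sum_congr rfl hstep]
      simp only [mul_ite, mul_zero]
      rw [Finset.sum_ite_eq (range (N+1)) k
        (fun j => b k * (starRingEnd ℂ) (b j) * (r:ℂ)^k * (r:ℂ)^j * (N+1:ℂ)), if_pos hk]
      ring
    rw [Finset.sum_congr rfl this, ← Finset.sum_mul]
    ring
  -- real form of the identity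
  have keyR : (∑ t ∈ range (N+1), Complex.normSq (∑ k ∈ range (N+1), b k * ((r:ℂ) * ω^t)^k))
      = ((N:ℝ)+1) * ∑ k ∈ range (N+1), Complex.normSq (b k) * r^(2*k) := by
    apply Complex.ofReal_injective
    push_cast
    simp only [← Complex.mul_conj]
    rw [key2]
    congr 1
    apply Finset.sum_congr rfl
    intro k _
    rw [two_mul, pow_add]
  have upper : (∑ t ∈ range (N+1), Complex.normSq (∑ k ∈ range (N+1), b k * ((r:ℂ) * ω^t)^k))
      ≤ ((N:ℝ)+1) * M^2 := by
    have hb : ∀ t ∈ range (N+1),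
        Complex.normSq (∑ k ∈ range (N+1), b k * ((r:ℂ) * ω^t)^k) ≤ M^2 := by
      intro t _
      rw [← Complex.sq_norm]
      have habs : ‖(r:ℂ) * ω^t‖ < 1 := by
        rw [norm_mul, norm_pow, habsω, Complex.norm_real, Real.norm_eq_abs, one_pow, mul_one,
          abs_of_pos hr0]
        exact hr1
      exact pow_le_pow_left₀ (norm_nonneg _) (hM _ habs) 2
    calc _ ≤ ∑ _t ∈ range (N+1), M^2 := Finset.sum_le_sum hb
    _ = ((N:ℝ)+1) * M^2 := by
        rw [Finset.sum_const, card_range, nsmul_eq_mul]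
        push_cast
        ring
  have lower : ((N:ℝ)+1) * ((1/4) * ∑ k ∈ range (N+1), Complex.normSq (b k))
      ≤ ((N:ℝ)+1) * ∑ k ∈ range (N+1), Complex.normSq (b k) * r^(2*k) := by
    apply mul_le_mul_of_nonneg_left _ (by positivity)
    rw [Finset.mul_sum]
    apply Finset.sum_le_sum
    intro k hk
    rw [mul_comm]
    exact mul_le_mul_of_nonneg_left (hrk k (Nat.lt_succ_iff.mp (mem_range.mp hk))) (Complex.normSq_nonneg _)
  have hfinal : (1/4) * ∑ k ∈ range (N+1), Complex.normSq (b k) ≤ M^2 := by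
    have := le_trans lower (keyR ▸ upper)
    exact le_of_mul_le_mul_left this (by positivity)
  have : ∑ k ∈ range (N+1), Complex.normSq (b k) ≤ 4 * M^2 := by linarith
  calc ∑ k ∈ range (N + 1), (‖b k‖) ^ 2
      = ∑ k ∈ range (N+1), Complex.normSq (b k) := by
        apply Finset.sum_congr rfl
        intro k _
        exact Complex.sq_norm _
  _ ≤ 4 * M^2 := this

lemma block_bound (α : ℝ) (hα : 0 ≤ α) (N : ℕ) (a : ℕ → ℂ) (n : ℕ) (M : ℝ)
    (hM0 : 0 ≤ M)
    (hmem : ∀ z : ℂ, ‖z‖ < 1 →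
      ‖∑ k ∈ range (N + 1), (dyadicPhi n k : ℂ) * a k * z ^ k‖ ≤ M) :
    ∑ k ∈ range (N + 1), dyadicPhi n k * (‖a k‖ * (1 + (k:ℝ)) ^ α)
      ≤ (2:ℝ) ^ (2*α+2) * ((2:ℝ) ^ ((α + 1/2) * (n:ℝ)) * M) := by
  have habs : ∀ k, ‖(dyadicPhi n k : ℂ) * a k‖
      = dyadicPhi n k * ‖a k‖ := by
    intro k
    rw [norm_mul, Complex.norm_real, Real.norm_eq_abs, _root_.abs_of_nonneg (phi_nonneg n k)]
  -- Parseval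
  have hpar : ∑ k ∈ range (N+1), (dyadicPhi n k * ‖a k‖)^2 ≤ 4 * M^2 := by
    calc ∑ k ∈ range (N+1), (dyadicPhi n k * ‖a k‖)^2
        = ∑ k ∈ range (N+1), (‖(dyadicPhi n k : ℂ) * a k‖)^2 := by
          exact Finset.sum_congr rfl (fun k _ => by rw [habs k])
    _ ≤ 4 * M^2 := parseval_bound N (fun k => (dyadicPhi n k : ℂ) * a k) M hmem
  -- Cauchy–Schwarz
  have hX0 : 0 ≤ ∑ k ∈ range (N+1), dyadicPhi n k * ‖a k‖ :=
    Finset.sum_nonneg (fun k _ => mul_nonneg (phi_nonneg n k) (norm_nonneg _))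
  have hCS : ∑ k ∈ range (N+1), dyadicPhi n k * ‖a k‖
      ≤ Real.sqrt ((2:ℝ)^(n+2)) * (2 * M) := by
    have hsq : (∑ k ∈ range (N+1), dyadicPhi n k * ‖a k‖)^2
        ≤ (2:ℝ)^(n+2) * (4 * M^2) := by
      set s := (range (N+1)).filter (fun k => dyadicPhi n k ≠ 0) with hs
      have h1 : ∑ k ∈ range (N+1), dyadicPhi n k * ‖a k‖
          = ∑ k ∈ s, dyadicPhi n k * ‖a k‖ := by
        rw [hs, Finset.sum_filter_of_ne]
        intro k _ hf h0
        exact hf (by rw [h0, zero_mul])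
      have h2 : (∑ k ∈ s, dyadicPhi n k * ‖a k‖)^2
          ≤ (#s : ℝ) * ∑ k ∈ s, (dyadicPhi n k * ‖a k‖)^2 :=
        sq_sum_le_card_mul_sum_sq
      have h3 : (#s:ℝ) ≤ (2:ℝ)^(n+2) := by
        have hsub : s ⊆ range (2^(n+1)+1) := by
          intro k hk
          rw [hs, mem_filter] at hk
          exact mem_range.mpr (Nat.lt_succ_of_le (phi_support hk.2))
        have hcard : #s ≤ 2^(n+1)+1 := by
          simpa using card_le_card hsub
        have h2n : (2:ℕ)^(n+1)+1 ≤ 2^(n+2) := by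
          have h1n : (1:ℕ) ≤ 2^(n+1) := Nat.one_le_two_pow
          calc (2:ℕ)^(n+1)+1 ≤ 2^(n+1)+2^(n+1) := by omega
          _ = 2^(n+2) := by ring
        exact_mod_cast le_trans hcard h2n
      have h4 : ∑ k ∈ s, (dyadicPhi n k * ‖a k‖)^2
          ≤ ∑ k ∈ range (N+1), (dyadicPhi n k * ‖a k‖)^2 :=
        Finset.sum_le_sum_of_subset_of_nonneg (filter_subset _ _)
          (fun k _ _ => sq_nonneg _)
      have h5 : (0:ℝ) ≤ ∑ k ∈ s, (dyadicPhi n k * ‖a k‖)^2 :=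
        Finset.sum_nonneg (fun k _ => sq_nonneg _)
      have h6 : (0:ℝ) < (2:ℝ)^(n+2) := by positivity
      rw [h1]
      calc (∑ k ∈ s, dyadicPhi n k * ‖a k‖)^2
          ≤ (#s : ℝ) * ∑ k ∈ s, (dyadicPhi n k * ‖a k‖)^2 := h2
      _ ≤ (2:ℝ)^(n+2) * ∑ k ∈ s, (dyadicPhi n k * ‖a k‖)^2 :=
          mul_le_mul_of_nonneg_right h3 h5
      _ ≤ (2:ℝ)^(n+2) * (4 * M^2) := by
          apply mul_le_mul_of_nonneg_left _ (le_of_lt h6)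
          exact le_trans h4 hpar
    have hle : ∑ k ∈ range (N+1), dyadicPhi n k * ‖a k‖
        ≤ Real.sqrt ((2:ℝ)^(n+2) * (4 * M^2)) := by
      rw [← Real.sqrt_sq hX0]
      exact Real.sqrt_le_sqrt hsq
    rwa [Real.sqrt_mul (by positivity),
      show (4:ℝ)*M^2 = (2*M)^2 by ring, Real.sqrt_sq (by positivity)] at hle
  -- pointwise weight bound
  have hpoint : ∀ k ∈ range (N+1),
      dyadicPhi n k * (‖a k‖ * (1 + (k:ℝ))^α)
      ≤ (2:ℝ)^(((n:ℝ)+2)*α) * (dyadicPhi n k * ‖a k‖) := by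
    intro k _
    rcases eq_or_ne (dyadicPhi n k) 0 with h | h
    · rw [h]; simp
    · have hk2 : k ≤ 2^(n+1) := phi_support h
      have hb : (1+(k:ℝ)) ≤ (2:ℝ)^(n+2) := by
        have hk2' : (k:ℝ) ≤ ((2:ℝ))^(n+1) := by exact_mod_cast hk2
        have h1n : (1:ℝ) ≤ (2:ℝ)^(n+1) := one_le_pow₀ (by norm_num)
        have : (2:ℝ)^(n+2) = 2^(n+1) + 2^(n+1) := by ring
        linarith
      have hw : (1+(k:ℝ))^α ≤ (2:ℝ)^(((n:ℝ)+2)*α) := by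
        have h0 : (0:ℝ) ≤ 1 + (k:ℝ) := by positivity
        have := Real.rpow_le_rpow h0 hb hα
        rwa [← Real.rpow_natCast 2 (n+2), ← Real.rpow_mul (by norm_num),
          show (((n+2:ℕ)):ℝ) * α = ((n:ℝ)+2)*α by push_cast; ring] at this
      calc dyadicPhi n k * (‖a k‖ * (1 + (k:ℝ))^α)
          = (1 + (k:ℝ))^α * (dyadicPhi n k * ‖a k‖) := by ring
      _ ≤ (2:ℝ)^(((n:ℝ)+2)*α) * (dyadicPhi n k * ‖a k‖) :=
          mul_le_mul_of_nonneg_right hw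
            (mul_nonneg (phi_nonneg n k) (norm_nonneg _))
  -- assemble
  have hsqrt : Real.sqrt ((2:ℝ)^(n+2)) = (2:ℝ)^(((n:ℝ)+2)/2) := by
    rw [← Real.rpow_natCast 2 (n+2), Real.sqrt_eq_rpow,
      ← Real.rpow_mul (by norm_num)]
    congr 1
    push_cast
    ring
  calc ∑ k ∈ range (N + 1), dyadicPhi n k * (‖a k‖ * (1 + (k:ℝ)) ^ α)
      ≤ ∑ k ∈ range (N+1), (2:ℝ)^(((n:ℝ)+2)*α) * (dyadicPhi n k * ‖a k‖) :=
        Finset.sum_le_sum hpoint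
  _ = (2:ℝ)^(((n:ℝ)+2)*α) * ∑ k ∈ range (N+1), dyadicPhi n k * ‖a k‖ := by
        rw [Finset.mul_sum]
  _ ≤ (2:ℝ)^(((n:ℝ)+2)*α) * (Real.sqrt ((2:ℝ)^(n+2)) * (2 * M)) :=
        mul_le_mul_of_nonneg_left hCS (Real.rpow_nonneg (by norm_num) _)
  _ = (2:ℝ) ^ (2*α+2) * ((2:ℝ) ^ ((α + 1/2) * (n:ℝ)) * M) := by
        rw [hsqrt]
        have hcoef : (2:ℝ)^(((n:ℝ)+2)*α) * ((2:ℝ)^(((n:ℝ)+2)/2) * 2)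
            = (2:ℝ)^(2*α+2) * (2:ℝ)^((α+1/2)*(n:ℝ)) := by
          calc (2:ℝ)^(((n:ℝ)+2)*α) * ((2:ℝ)^(((n:ℝ)+2)/2) * 2)
              = ((2:ℝ)^(((n:ℝ)+2)*α) * (2:ℝ)^(((n:ℝ)+2)/2)) * 2 := by ring
            _ = (2:ℝ)^(((n:ℝ)+2)*α + ((n:ℝ)+2)/2) * 2 := by
                rw [← Real.rpow_add (by norm_num)]
            _ = (2:ℝ)^((((n:ℝ)+2)*α + ((n:ℝ)+2)/2) + 1) := by
                rw [Real.rpow_add_one (by norm_num : (2:ℝ) ≠ 0)]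
            _ = (2:ℝ)^((2*α+2) + (α+1/2)*(n:ℝ)) := by
                congr 1; ring
            _ = (2:ℝ)^(2*α+2) * (2:ℝ)^((α+1/2)*(n:ℝ)) :=
                Real.rpow_add (by norm_num) _ _
        nlinarith [hcoef]

/-- **Embedding of the analytic Besov space into the weighted Wiener
algebra (Remark 5.2).**  For every `α ≥ 0` there is `C ≥ 0` such that for
every polynomial `f(z) = Σ_{k=0}^N a_k z^k`,
`Σ_k |a_k| (1+k)^α ≤ C ‖f‖_{B^{α+1/2}_{∞,1}(𝔻)}`, i.e.
`B^{α+1/2}_{∞,1}(𝔻) ↪ A_α(𝔻)` continuously. -/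
theorem besov_embeds_in_weighted_wiener (α : ℝ) (hα : 0 ≤ α) :
    ∃ C : ℝ, 0 ≤ C ∧
      ∀ (N : ℕ) (a : ℕ → ℂ),
        ∑ k ∈ Finset.range (N + 1), ‖a k‖ * (1 + (k : ℝ)) ^ α ≤
          C * ∑' n : ℕ, (2 : ℝ) ^ ((α + 1 / 2) * (n : ℝ)) *
            sSup {r : ℝ | ∃ z : ℂ, ‖z‖ < 1 ∧
              r = ‖∑ k ∈ Finset.range (N + 1),
                    (dyadicPhi n k : ℂ) * a k * z ^ k‖} := by
  refine ⟨(2:ℝ) ^ (2*α+2), Real.rpow_nonneg (by norm_num) _, ?_⟩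
  intro N a
  set S : ℕ → Set ℝ := fun n => {r : ℝ | ∃ z : ℂ, ‖z‖ < 1 ∧
      r = ‖∑ k ∈ Finset.range (N + 1),
        (dyadicPhi n k : ℂ) * a k * z ^ k‖} with hS
  have hbdd : ∀ n, BddAbove (S n) := by
    intro n
    refine ⟨∑ k ∈ Finset.range (N+1), ‖(dyadicPhi n k : ℂ) * a k‖, ?_⟩
    rintro x ⟨z, hz, rfl⟩
    calc ‖∑ k ∈ Finset.range (N + 1), (dyadicPhi n k : ℂ) * a k * z ^ k‖
        ≤ ∑ k ∈ Finset.range (N + 1), ‖(dyadicPhi n k : ℂ) * a k * z ^ k‖ :=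
          norm_sum_le _ _
    _ ≤ ∑ k ∈ Finset.range (N+1), ‖(dyadicPhi n k : ℂ) * a k‖ := by
        apply Finset.sum_le_sum
        intro k _
        rw [norm_mul]
        apply mul_le_of_le_one_right (norm_nonneg _)
        rw [norm_pow]
        exact pow_le_one₀ (norm_nonneg _) (le_of_lt hz)
  have hmem : ∀ n (z : ℂ), ‖z‖ < 1 →
      ‖∑ k ∈ Finset.range (N+1), (dyadicPhi n k : ℂ) * a k * z ^ k‖
        ≤ sSup (S n) := fun n z hz => le_csSup (hbdd n) ⟨z, hz, rfl⟩
  have hM0 : ∀ n, 0 ≤ sSup (S n) := fun n =>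
    le_trans (norm_nonneg _) (hmem n 0 (by simp))
  have hvanish : ∀ n, N + 2 ≤ n → sSup (S n) = 0 := by
    intro n hn
    have hzero : ∀ z : ℂ,
        (∑ k ∈ Finset.range (N+1), (dyadicPhi n k : ℂ) * a k * z ^ k) = 0 := by
      intro z
      apply Finset.sum_eq_zero
      intro k hk
      have hphi : dyadicPhi n k = 0 := by
        apply phi_zero_low (by omega)
        have h1 : k ≤ N := Nat.lt_succ_iff.mp (Finset.mem_range.mp hk)
        have h2 : N < 2^N := Nat.lt_two_pow_self
        have h3 : 2^N ≤ 2^(n-1) := Nat.pow_le_pow_right (by norm_num) (by omega)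
        omega
      rw [hphi]
      simp
    have hSn : S n = {0} := by
      ext x
      simp only [hS, Set.mem_setOf_eq, Set.mem_singleton_iff]
      constructor
      · rintro ⟨z, hz, rfl⟩
        rw [hzero z]
        simp
      · rintro rfl
        exact ⟨0, by simp, by rw [hzero 0]; simp⟩
    rw [hSn, csSup_singleton]
  set F : ℕ → ℝ := fun n => (2:ℝ) ^ ((α + 1/2) * (n:ℝ)) * sSup (S n) with hF
  have hFnonneg : ∀ n, 0 ≤ F n := fun n =>
    mul_nonneg (Real.rpow_nonneg (by norm_num) _) (hM0 n)
  have hFzero : ∀ n ∉ Finset.range (N+2), F n = 0 := by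
    intro n hn
    have hn' : N + 2 ≤ n := by
      by_contra h
      exact hn (Finset.mem_range.mpr (by omega))
    show (2:ℝ) ^ ((α + 1/2) * (n:ℝ)) * sSup (S n) = 0
    rw [hvanish n hn', mul_zero]
  have htsum : ∑ n ∈ Finset.range (N+2), F n ≤ ∑' n, F n :=
    Summable.sum_le_tsum _ (fun n _ => hFnonneg n) (summable_of_ne_finset_zero hFzero)
  calc ∑ k ∈ Finset.range (N + 1), ‖a k‖ * (1 + (k : ℝ)) ^ α
      = ∑ k ∈ Finset.range (N + 1), (∑ n ∈ Finset.range (N+2), dyadicPhi n k) *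
          (‖a k‖ * (1 + (k : ℝ)) ^ α) := by
        apply Finset.sum_congr rfl
        intro k hk
        rw [phi_sum_eq_one (Nat.lt_succ_iff.mp (Finset.mem_range.mp hk)), one_mul]
  _ = ∑ n ∈ Finset.range (N+2), ∑ k ∈ Finset.range (N+1),
        dyadicPhi n k * (‖a k‖ * (1 + (k : ℝ)) ^ α) := by
        simp_rw [Finset.sum_mul]
        rw [Finset.sum_comm]
  _ ≤ ∑ n ∈ Finset.range (N+2), (2:ℝ) ^ (2*α+2) * F n := by
        apply Finset.sum_le_sum
        intro n _
        exact block_bound α hα N a n (sSup (S n)) (hM0 n) (hmem n)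
  _ = (2:ℝ) ^ (2*α+2) * ∑ n ∈ Finset.range (N+2), F n := by
        rw [Finset.mul_sum]
  _ ≤ (2:ℝ) ^ (2*α+2) * ∑' n, F n :=
        mul_le_mul_of_nonneg_left htsum (Real.rpow_nonneg (by norm_num) _)

end BesovProof
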